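/- There exists a sequence of C² functions φ_k : ℝ → ℝ such that: φ_k(z) = φ_k'(z) = 0 for z ≤ 0; φ_k(z) → max(z,0) pointwise as k → ∞; 0 ≤ φ_k'(z) ≤ 1 for all z; and φ_k''(z) ≤ 2/(kz) for all z > 0. -/

import Mathlib

open MeasureTheory Filter Set
open scoped ENNReal Topology NNReal

noncomputable def myP (t : ℝ) : ℝ := Real.smoothTransition t * Real.smoothTransition (2 - t)

lemma myP_cont : Continuous myP :=
  Real.smoothTransition.continuous.mul
    (Real.smoothTransition.continuous.comp (continuous_const.sub continuous_id))

lemma myP_nonneg (t : ℝ) : 0 ≤ myP t :=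
  mul_nonneg (Real.smoothTransition.nonneg _) (Real.smoothTransition.nonneg _)

lemma myP_le_one (t : ℝ) : myP t ≤ 1 :=
  mul_le_one₀ (Real.smoothTransition.le_one _) (Real.smoothTransition.nonneg _)
    (Real.smoothTransition.le_one _)

lemma myP_zero_of_nonpos {t : ℝ} (h : t ≤ 0) : myP t = 0 := by
  simp [myP, Real.smoothTransition.zero_of_nonpos h]

lemma myP_zero_of_two_le {t : ℝ} (h : 2 ≤ t) : myP t = 0 := by
  simp [myP, Real.smoothTransition.zero_of_nonpos (by linarith : 2 - t ≤ 0)]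

lemma st_add_st (x : ℝ) : Real.smoothTransition x + Real.smoothTransition (1 - x) = 1 := by
  unfold Real.smoothTransition
  rw [sub_sub_cancel, add_comm (expNegInvGlue (1 - x)), ← add_div, div_self]
  exact (Real.smoothTransition.pos_denom x).ne'

lemma int_st : ∫ u in (0:ℝ)..1, Real.smoothTransition u = 1/2 := by
  have h1 : ∫ u in (0:ℝ)..1, Real.smoothTransition (1 - u)
      = ∫ u in (0:ℝ)..1, Real.smoothTransition u := by
    rw [intervalIntegral.integral_comp_sub_left]; norm_num
  have h2 : (∫ u in (0:ℝ)..1, Real.smoothTransition u)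
      + ∫ u in (0:ℝ)..1, Real.smoothTransition (1 - u) = 1 := by
    rw [← intervalIntegral.integral_add
      (Real.smoothTransition.continuous.intervalIntegrable _ _)
      (show IntervalIntegrable (fun u => Real.smoothTransition (1 - u)) volume 0 1 from
        (Real.smoothTransition.continuous.comp (continuous_const.sub continuous_id)).intervalIntegrable _ _)]
    simp only [st_add_st]
    simp
  rw [h1] at h2; linarith

lemma int_myP : ∫ u in (0:ℝ)..2, myP u = 1 := by
  have hi : ∀ a b : ℝ, IntervalIntegrable myP volume a b :=
    fun a b => myP_cont.intervalIntegrable a b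
  rw [← intervalIntegral.integral_add_adjacent_intervals (hi 0 1) (hi 1 2)]
  have e1 : ∫ u in (0:ℝ)..1, myP u = ∫ u in (0:ℝ)..1, Real.smoothTransition u := by
    apply intervalIntegral.integral_congr
    intro u hu
    rw [uIcc_of_le (by norm_num : (0:ℝ) ≤ 1)] at hu
    rw [myP, Real.smoothTransition.one_of_one_le (by linarith [hu.2] : (1:ℝ) ≤ 2 - u), mul_one]
  have e2 : ∫ u in (1:ℝ)..2, myP u = ∫ u in (0:ℝ)..1, Real.smoothTransition u := by
    have : ∫ u in (1:ℝ)..2, myP u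
        = ∫ u in (1:ℝ)..2, Real.smoothTransition (2 - u) := by
      apply intervalIntegral.integral_congr
      intro u hu
      rw [uIcc_of_le (by norm_num : (1:ℝ) ≤ 2)] at hu
      rw [myP, Real.smoothTransition.one_of_one_le hu.1, one_mul]
    rw [this, intervalIntegral.integral_comp_sub_left]; norm_num
  rw [e1, e2, int_st]; norm_num

noncomputable def myS (t : ℝ) : ℝ := ∫ u in (0:ℝ)..t, myP u

lemma myS_hasDerivAt (t : ℝ) : HasDerivAt myS (myP t) t :=
  (myP_cont.integral_hasStrictDerivAt 0 t).hasDerivAt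

lemma myS_deriv : deriv myS = myP :=
  funext fun t => (myS_hasDerivAt t).deriv

lemma myS_contDiff : ContDiff ℝ 1 myS :=
  contDiff_one_iff_deriv.mpr
    ⟨fun t => (myS_hasDerivAt t).differentiableAt, by rw [myS_deriv]; exact myP_cont⟩

lemma myS_zero_of_nonpos {t : ℝ} (h : t ≤ 0) : myS t = 0 := by
  rw [myS, intervalIntegral.integral_congr (g := fun _ => (0:ℝ))
    (fun u hu => myP_zero_of_nonpos (by
      rw [uIcc_of_ge h] at hu; exact hu.2))]
  simp

lemma myS_one_of_two_le {t : ℝ} (h : 2 ≤ t) : myS t = 1 := by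
  rw [myS, ← intervalIntegral.integral_add_adjacent_intervals
    (myP_cont.intervalIntegrable 0 2) (myP_cont.intervalIntegrable 2 t), int_myP,
    intervalIntegral.integral_congr (g := fun _ => (0:ℝ))
      (fun u hu => myP_zero_of_two_le (by rw [uIcc_of_le h] at hu; exact hu.1))]
  simp

lemma myS_mono : Monotone myS := by
  apply monotone_of_deriv_nonneg (fun t => (myS_hasDerivAt t).differentiableAt)
  intro t; rw [myS_deriv]; exact myP_nonneg t

lemma myS_nonneg (t : ℝ) : 0 ≤ myS t := by
  rcases le_or_gt t 0 with h | h
  · rw [myS_zero_of_nonpos h]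
  · have : myS 0 ≤ myS t := myS_mono h.le
    rwa [myS_zero_of_nonpos le_rfl] at this

lemma myS_le_one (t : ℝ) : myS t ≤ 1 := by
  have : myS t ≤ myS (max t 2) := myS_mono (le_max_left _ _)
  rwa [myS_one_of_two_le (le_max_right _ _)] at this

noncomputable def myK (k : ℕ) : ℝ := ((max k 1 : ℕ) : ℝ)

lemma myK_pos (k : ℕ) : 0 < myK k := by
  rw [myK]
  exact_mod_cast Nat.lt_of_lt_of_le Nat.zero_lt_one (le_max_right k 1)

lemma myK_eq {k : ℕ} (h : 1 ≤ k) : myK k = (k : ℝ) := by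
  rw [myK, max_eq_left h]

noncomputable def myL (k : ℕ) (u : ℝ) : ℝ := (2 / myK k) * (Real.log u + (myK k) ^ 2)

noncomputable def myG (k : ℕ) (u : ℝ) : ℝ := if u ≤ 0 then 0 else myS (myL k u)

noncomputable def myEps (k : ℕ) : ℝ := Real.exp (-(myK k) ^ 2)

noncomputable def myB (k : ℕ) : ℝ := Real.exp (myK k - (myK k) ^ 2)

lemma myG_zero {k : ℕ} {u : ℝ} (h : u < myEps k) : myG k u = 0 := by
  rcases le_or_gt u 0 with h0 | h0
  · rw [myG, if_pos h0]
  · rw [myG, if_neg (not_le.mpr h0)]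
    apply myS_zero_of_nonpos
    have hlog : Real.log u < -(myK k) ^ 2 :=
      (Real.log_lt_iff_lt_exp h0).mpr h
    have h2 : Real.log u + (myK k) ^ 2 < 0 := by linarith
    exact mul_nonpos_iff.mpr (Or.inl ⟨div_nonneg (by norm_num) (myK_pos k).le, h2.le⟩)

lemma myG_one {k : ℕ} {u : ℝ} (h : myB k ≤ u) : myG k u = 1 := by
  have hu : 0 < u := lt_of_lt_of_le (Real.exp_pos _) h
  rw [myG, if_neg (not_le.mpr hu)]
  apply myS_one_of_two_le
  have hlog : myK k - (myK k) ^ 2 ≤ Real.log u :=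
    (Real.le_log_iff_exp_le hu).mpr h
  have h2 : myK k ≤ Real.log u + (myK k) ^ 2 := by linarith
  calc (2:ℝ) = (2 / myK k) * myK k := (div_mul_cancel₀ 2 (myK_pos k).ne').symm
    _ ≤ myL k u := mul_le_mul_of_nonneg_left h2
        (div_nonneg (by norm_num) (myK_pos k).le)

lemma myG_nonneg (k : ℕ) (u : ℝ) : 0 ≤ myG k u := by
  rw [myG]; split
  · exact le_rfl
  · exact myS_nonneg _

lemma myG_le_one (k : ℕ) (u : ℝ) : myG k u ≤ 1 := by
  rw [myG]; split
  · norm_num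
  · exact myS_le_one _

lemma myG_contDiff (k : ℕ) : ContDiff ℝ 1 (myG k) := by
  rw [contDiff_iff_contDiffAt]
  intro x
  rcases lt_or_ge x (myEps k) with hx | hx
  · apply ContDiffAt.congr_of_eventuallyEq (contDiffAt_const (c := (0:ℝ)))
    filter_upwards [Iio_mem_nhds hx] with u hu
    exact myG_zero hu
  · have hx0 : 0 < x := lt_of_lt_of_le (Real.exp_pos _) hx
    have hL : ContDiffAt ℝ 1 (myL k) x := by
      apply ContDiffAt.mul contDiffAt_const
      exact (Real.contDiffAt_log.mpr hx0.ne').add contDiffAt_const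
    apply ContDiffAt.congr_of_eventuallyEq
      ((myS_contDiff.contDiffAt).comp x hL)
    filter_upwards [Ioi_mem_nhds hx0] with u hu
    rw [myG, if_neg (not_le.mpr hu)]; rfl

lemma myG_cont (k : ℕ) : Continuous (myG k) := (myG_contDiff k).continuous

lemma myG_hasDerivAt {k : ℕ} {z : ℝ} (hz : 0 < z) :
    HasDerivAt (myG k) (myP (myL k z) * ((2 / myK k) * z⁻¹)) z := by
  have hL : HasDerivAt (myL k) ((2 / myK k) * z⁻¹) z := by
    have h1 : HasDerivAt (fun u : ℝ => Real.log u + (myK k) ^ 2) z⁻¹ z :=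
      (Real.hasDerivAt_log hz.ne').add_const _
    exact h1.const_mul (2 / myK k)
  have := ((myS_hasDerivAt (myL k z)).comp z hL)
  apply this.congr_of_eventuallyEq
  filter_upwards [Ioi_mem_nhds hz] with u hu
  rw [myG, if_neg (not_le.mpr hu)]; rfl

noncomputable def myPhi (k : ℕ) (z : ℝ) : ℝ := ∫ u in (0:ℝ)..z, myG k u

lemma myPhi_hasDerivAt (k : ℕ) (z : ℝ) : HasDerivAt (myPhi k) (myG k z) z :=
  ((myG_cont k).integral_hasStrictDerivAt 0 z).hasDerivAt

lemma myPhi_deriv (k : ℕ) : deriv (myPhi k) = myG k :=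
  funext fun z => (myPhi_hasDerivAt k z).deriv

lemma myPhi_contDiff (k : ℕ) : ContDiff ℝ 2 (myPhi k) := by
  have : ((2 : ℕ) : WithTop ℕ∞) = (1 : WithTop ℕ∞) + 1 := by norm_num
  rw [show (2 : WithTop ℕ∞) = (1 : WithTop ℕ∞) + 1 by norm_num,
    contDiff_succ_iff_deriv]
  refine ⟨fun z => (myPhi_hasDerivAt k z).differentiableAt, by simp, ?_⟩
  rw [myPhi_deriv]; exact myG_contDiff k

lemma myPhi_zero {k : ℕ} {z : ℝ} (hz : z ≤ 0) : myPhi k z = 0 := by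
  rw [myPhi, intervalIntegral.integral_congr (g := fun _ => (0:ℝ))
    (fun u hu => by
      rw [uIcc_of_ge hz] at hu
      rw [myG, if_pos hu.2])]
  simp

lemma myPhi_deriv2 {k : ℕ} (hk : 1 ≤ k) {z : ℝ} (hz : 0 < z) :
    deriv (deriv (myPhi k)) z ≤ 2 / ((k : ℝ) * z) := by
  rw [myPhi_deriv, (myG_hasDerivAt hz).deriv, myK_eq hk]
  have h1 : (2 / (k : ℝ)) * z⁻¹ = 2 / ((k : ℝ) * z) := by
    rw [div_mul_eq_div_div, div_div, ← div_div]
    ring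
  rw [h1]
  exact mul_le_of_le_one_left (by positivity) (myP_le_one _)

lemma myPhi_le {k : ℕ} {z : ℝ} (hz : 0 ≤ z) : myPhi k z ≤ z := by
  have : myPhi k z ≤ ∫ u in (0:ℝ)..z, (1:ℝ) :=
    intervalIntegral.integral_mono_on hz ((myG_cont k).intervalIntegrable _ _)
      (intervalIntegrable_const) (fun u _ => myG_le_one k u)
  simpa using this

lemma myPhi_ge {k : ℕ} {z : ℝ} (hz : myB k ≤ z) : z - myB k ≤ myPhi k z := by
  have hb : 0 < myB k := Real.exp_pos _
  have h1 : myPhi k z = (∫ u in (0:ℝ)..myB k, myG k u) + ∫ u in myB k..z, myG k u :=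
    (intervalIntegral.integral_add_adjacent_intervals
      ((myG_cont k).intervalIntegrable _ _) ((myG_cont k).intervalIntegrable _ _)).symm
  have h2 : 0 ≤ ∫ u in (0:ℝ)..myB k, myG k u :=
    intervalIntegral.integral_nonneg hb.le (fun u _ => myG_nonneg k u)
  have h3 : ∫ u in myB k..z, myG k u = z - myB k := by
    rw [intervalIntegral.integral_congr (g := fun _ => (1:ℝ))
      (fun u hu => by
        rw [uIcc_of_le hz] at hu
        exact myG_one hu.1)]
    simp
  rw [h1, h3]; linarith

lemma myB_tendsto : Tendsto myB atTop (𝓝 0) := by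
  have hK : Tendsto myK atTop atTop := by
    apply tendsto_atTop_mono (f := fun k : ℕ => (k : ℝ))
    · intro k
      rw [myK]
      exact_mod_cast le_max_left k 1
    · exact tendsto_natCast_atTop_atTop
  have hq : Tendsto (fun x : ℝ => x * (x - 1)) atTop atTop :=
    tendsto_id.atTop_mul_atTop₀ (tendsto_atTop_add_const_right _ (-1) tendsto_id)
  have hsub : Tendsto (fun x : ℝ => x - x ^ 2) atTop atBot := by
    have : (fun x : ℝ => x - x ^ 2) = fun x => -(x * (x - 1)) := by funext x; ring
    rw [this]
    exact tendsto_neg_atTop_atBot.comp hq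
  exact Real.tendsto_exp_atBot.comp (hsub.comp hK)

/-- There is a sequence of `C²` functions `φ_k` approximating the positive part:
`φ_k = φ_k' = 0` on `(-∞,0]`, `φ_k(z) → z⁺` pointwise, `0 ≤ φ_k' ≤ 1`, and
`φ_k''(z) ≤ 2/(kz)` for `z > 0` (for `k ≥ 1`). -/
theorem exists_smooth_positive_part_approximation :
    ∃ φ : ℕ → ℝ → ℝ,
      (∀ k, ContDiff ℝ 2 (φ k)) ∧
      (∀ k, ∀ z ≤ (0:ℝ), φ k z = 0 ∧ deriv (φ k) z = 0) ∧
      (∀ k (z : ℝ), 0 ≤ deriv (φ k) z ∧ deriv (φ k) z ≤ 1) ∧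
      (∀ k, 1 ≤ k → ∀ z > (0:ℝ), deriv (deriv (φ k)) z ≤ 2 / ((k : ℝ) * z)) ∧
      (∀ z : ℝ, Tendsto (fun k => φ k z) atTop (nhds (max z 0))) := by
  refine ⟨myPhi, fun k => myPhi_contDiff k, ?_, ?_, ?_, ?_⟩
  · intro k z hz
    refine ⟨myPhi_zero hz, ?_⟩
    rw [myPhi_deriv, myG, if_pos hz]
  · intro k z
    rw [myPhi_deriv]
    exact ⟨myG_nonneg k z, myG_le_one k z⟩
  · intro k hk z hz
    exact myPhi_deriv2 hk hz
  · intro z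
    rcases le_or_gt z 0 with hz | hz
    · rw [max_eq_right hz]
      have : (fun k => myPhi k z) = fun _ => (0:ℝ) := funext fun k => myPhi_zero hz
      rw [this]
      exact tendsto_const_nhds
    · rw [max_eq_left hz.le]
      apply tendsto_of_tendsto_of_tendsto_of_le_of_le' (g := fun k => z - myB k)
        (h := fun _ => z)
      · simpa using tendsto_const_nhds.sub myB_tendsto
      · exact tendsto_const_nhds
      · filter_upwards [myB_tendsto.eventually_lt_const hz] with k hk
        exact myPhi_ge hk.le
      · exact Eventually.of_forall fun k => myPhi_le hz.le
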